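/- Let β^(4) = (β_{ij})_{0≤i+j≤4} be a real sequence with β₀₀ = 1 and with positive definite 6×6 moment matrix M(2). Then there exists a degree-one transformation Ψ(x,y) = (a+bx+cy, d+ex+fy) with bf − ce ≠ 0 such that the transformed sequence β̃_{ij} := L_β(Ψ₁^i Ψ₂^j) satisfies β̃₀₀ = 1, β̃₁₀ = β̃₀₁ = β̃₁₁ = 0, β̃₂₀ = β̃₀₂ = 1; that is, the 3×3 submatrix M̃(1) of the transformed moment matrix M̃(2) is the identity matrix (and M̃(2) is still positive definite). -/

import Mathlib

/-- Index set for the moment matrix of degree `n`: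
pairs `(i,j)` of nonnegative integers with `i + j ≤ n`. -/
abbrev MIdx (n : ℕ) := {ij : Fin (n+1) × Fin (n+1) // (ij.1 : ℕ) + (ij.2 : ℕ) ≤ n}

/-- The moment matrix `M(n)` of a real sequence `β = (β_{ij})`:
`M(n)[(i,j),(k,l)] = β_{i+k, j+l}`. -/
def momentMatrix (n : ℕ) (β : ℕ → ℕ → ℝ) : Matrix (MIdx n) (MIdx n) ℝ :=
  fun p q => β ((p.val.1 : ℕ) + (q.val.1 : ℕ)) ((p.val.2 : ℕ) + (q.val.2 : ℕ))
open MvPolynomial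

/-- The Riesz functional of a sequence `β`: `L_β(Σ p_{ij} x^i y^j) = Σ p_{ij} β_{ij}`. -/
noncomputable def riesz (β : ℕ → ℕ → ℝ) (p : MvPolynomial (Fin 2) ℝ) : ℝ :=
  ∑ m ∈ p.support, p.coeff m * β (m 0) (m 1)

/-- The sequence transformed by the degree-one map
`Ψ(x,y) = (a + bx + cy, d + ex + fy)`:  `β̃_{ij} := L_β(Ψ₁^i Ψ₂^j)`. -/
noncomputable def transSeq (β : ℕ → ℕ → ℝ) (a b c d e f : ℝ) (i j : ℕ) : ℝ :=
  riesz β ((C a + C b * X 0 + C c * X 1) ^ i * (C d + C e * X 0 + C f * X 1) ^ j)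

/-! ### Auxiliary machinery -/

section Aux

/-- exponent Finsupp for the monomial `x^i y^j` -/
noncomputable def mexp (i j : ℕ) : Fin 2 →₀ ℕ := Finsupp.single 0 i + Finsupp.single 1 j

@[simp] lemma mexp_0 (i j : ℕ) : mexp i j 0 = i := by
  simp [mexp, Finsupp.single_apply]

@[simp] lemma mexp_1 (i j : ℕ) : mexp i j 1 = j := by
  simp [mexp, Finsupp.single_apply]

lemma mexp_inj {i j k l : ℕ} (h : mexp i j = mexp k l) : i = k ∧ j = l := by
  constructor
  · have := DFunLike.congr_fun h 0; simpa using this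
  · have := DFunLike.congr_fun h 1; simpa using this

lemma mexp_sum (m : Fin 2 →₀ ℕ) : (m.sum fun _ e => e) = m 0 + m 1 := by
  rw [Finsupp.sum_fintype _ _ (fun _ => rfl), Fin.sum_univ_two]

lemma eq_mexp_of (m : Fin 2 →₀ ℕ) : m = mexp (m 0) (m 1) := by
  ext i
  fin_cases i <;> simp

/-- The degree-≤2 polynomial with coefficient vector `v`. -/
noncomputable def PP (v : MIdx 2 → ℝ) : MvPolynomial (Fin 2) ℝ :=
  ∑ p : MIdx 2, monomial (mexp p.1.1 p.1.2) (v p)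

lemma coeff_PP (v : MIdx 2 → ℝ) (q : MIdx 2) :
    coeff (mexp q.1.1 q.1.2) (PP v) = v q := by
  unfold PP
  rw [MvPolynomial.coeff_sum]
  rw [Finset.sum_eq_single q]
  · simp [MvPolynomial.coeff_monomial]
  · intro p _ hpq
    rw [MvPolynomial.coeff_monomial, if_neg]
    intro h
    obtain ⟨h1, h2⟩ := mexp_inj h
    exact hpq (Subtype.ext (Prod.ext (Fin.ext h1) (Fin.ext h2)))
  · intro h; exact absurd (Finset.mem_univ q) h

lemma PP_eq_zero {v : MIdx 2 → ℝ} (h : PP v = 0) : v = 0 := by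
  funext q
  have := coeff_PP v q
  rw [h] at this
  simpa using this.symm

/-! riesz linearity -/

lemma riesz_superset (β : ℕ → ℕ → ℝ) (p : MvPolynomial (Fin 2) ℝ) (s : Finset (Fin 2 →₀ ℕ))
    (hs : p.support ⊆ s) : riesz β p = ∑ m ∈ s, p.coeff m * β (m 0) (m 1) := by
  unfold riesz
  refine Finset.sum_subset hs ?_
  intro m _ hm
  rw [MvPolynomial.notMem_support_iff.mp hm, zero_mul]

lemma riesz_add (β : ℕ → ℕ → ℝ) (p q : MvPolynomial (Fin 2) ℝ) :
    riesz β (p + q) = riesz β p + riesz β q := by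
  rw [riesz_superset β (p+q) (p.support ∪ q.support) (fun m hm => MvPolynomial.support_add hm),
      riesz_superset β p (p.support ∪ q.support) Finset.subset_union_left,
      riesz_superset β q (p.support ∪ q.support) Finset.subset_union_right,
      ← Finset.sum_add_distrib]
  simp [coeff_add, add_mul]

lemma riesz_smul (β : ℕ → ℕ → ℝ) (r : ℝ) (p : MvPolynomial (Fin 2) ℝ) :
    riesz β (r • p) = r * riesz β p := by
  rw [riesz_superset β (r • p) p.support (MvPolynomial.support_smul),
      riesz]
  rw [Finset.mul_sum]
  refine Finset.sum_congr rfl fun m _ => ?_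
  rw [MvPolynomial.coeff_smul]
  simp [mul_assoc]

lemma riesz_monomial (β : ℕ → ℕ → ℝ) (m : Fin 2 →₀ ℕ) (r : ℝ) :
    riesz β (monomial m r) = r * β (m 0) (m 1) := by
  by_cases hr : r = 0
  · simp [hr, riesz]
  · rw [riesz_superset β _ {m} (by rw [MvPolynomial.support_monomial]; simp [hr])]
    simp [MvPolynomial.coeff_monomial]

lemma riesz_sum (β : ℕ → ℕ → ℝ) {ι : Type*} (s : Finset ι) (f : ι → MvPolynomial (Fin 2) ℝ) :
    riesz β (∑ i ∈ s, f i) = ∑ i ∈ s, riesz β (f i) := by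
  classical
  induction s using Finset.induction with
  | empty => simp [riesz]
  | insert _ _ h ih => rw [Finset.sum_insert h, riesz_add, ih, Finset.sum_insert h]

/-! quadratic form -/

lemma riesz_PP_mul_PP (β : ℕ → ℕ → ℝ) (v w : MIdx 2 → ℝ) :
    riesz β (PP v * PP w) = dotProduct v ((momentMatrix 2 β).mulVec w) := by
  unfold PP
  rw [Finset.sum_mul_sum]
  rw [riesz_sum]
  simp only [riesz_sum, MvPolynomial.monomial_mul, riesz_monomial]
  rw [dotProduct]
  refine Finset.sum_congr rfl fun p _ => ?_
  rw [Matrix.mulVec, dotProduct, Finset.mul_sum]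
  refine Finset.sum_congr rfl fun q _ => ?_
  simp [momentMatrix, Finsupp.add_apply]
  ring

lemma riesz_sq_pos (β : ℕ → ℕ → ℝ) (hpd : (momentMatrix 2 β).PosDef)
    {v : MIdx 2 → ℝ} (hv : v ≠ 0) : 0 < riesz β (PP v * PP v) := by
  rw [riesz_PP_mul_PP]
  have := hpd.dotProduct_mulVec_pos hv
  simpa using this

/-! total degree -/

lemma totalDegree_PP (v : MIdx 2 → ℝ) : (PP v).totalDegree ≤ 2 := by
  unfold PP
  refine le_trans (MvPolynomial.totalDegree_finset_sum _ _) ?_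
  refine Finset.sup_le fun p _ => ?_
  refine le_trans (MvPolynomial.totalDegree_monomial_le _ _) ?_
  show ((mexp (p.1.1:ℕ) (p.1.2:ℕ)).sum fun _ e => e) ≤ 2
  rw [mexp_sum]
  simpa using p.2

lemma exists_PP (p : MvPolynomial (Fin 2) ℝ) (hp : p.totalDegree ≤ 2) :
    ∃ w : MIdx 2 → ℝ, PP w = p := by
  refine ⟨fun q => coeff (mexp q.1.1 q.1.2) p, ?_⟩
  apply MvPolynomial.ext
  intro m
  by_cases hm : m 0 + m 1 ≤ 2
  · have h0 : (m 0 : ℕ) < 3 := by omega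
    have h1 : (m 1 : ℕ) < 3 := by omega
    set q : MIdx 2 := ⟨(⟨m 0, h0⟩, ⟨m 1, h1⟩), by simpa using hm⟩ with hq
    have hme : m = mexp q.1.1 q.1.2 := by
      rw [hq]; simpa using eq_mexp_of m
    rw [hme, coeff_PP]
  · have hR : coeff m p = 0 := by
      by_contra hc
      have hmem : m ∈ p.support := MvPolynomial.mem_support_iff.mpr hc
      have := MvPolynomial.le_totalDegree hmem
      rw [mexp_sum] at this
      omega
    rw [hR]
    unfold PP
    rw [MvPolynomial.coeff_sum]
    refine Finset.sum_eq_zero fun q _ => ?_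
    rw [MvPolynomial.coeff_monomial, if_neg]
    intro h
    obtain ⟨h1, h2⟩ := mexp_inj (h.trans (eq_mexp_of m))
    have := q.2
    omega

/-! explicit index elements and the expansion of PP -/

def i00 : MIdx 2 := ⟨(0,0), by decide⟩
def i10 : MIdx 2 := ⟨(1,0), by decide⟩
def i01 : MIdx 2 := ⟨(0,1), by decide⟩
def i20 : MIdx 2 := ⟨(2,0), by decide⟩
def i11 : MIdx 2 := ⟨(1,1), by decide⟩
def i02 : MIdx 2 := ⟨(0,2), by decide⟩

lemma CXX_eq (r : ℝ) (i j : ℕ) :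
    (C r * X 0 ^ i * X 1 ^ j : MvPolynomial (Fin 2) ℝ) = monomial (mexp i j) r := by
  rw [MvPolynomial.X_pow_eq_monomial, MvPolynomial.X_pow_eq_monomial, MvPolynomial.C_apply,
    MvPolynomial.monomial_mul, MvPolynomial.monomial_mul, mexp]
  simp

lemma PP_eq (v : MIdx 2 → ℝ) :
    PP v = C (v i00) + C (v i10) * X 0 + C (v i01) * X 1
      + C (v i20) * X 0 ^ 2 + C (v i11) * (X 0 * X 1) + C (v i02) * X 1 ^ 2 := by
  unfold PP
  rw [show (Finset.univ : Finset (MIdx 2)) = {i00, i10, i01, i20, i11, i02} from by decide]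
  rw [Finset.sum_insert (by decide), Finset.sum_insert (by decide),
    Finset.sum_insert (by decide), Finset.sum_insert (by decide),
    Finset.sum_insert (by decide), Finset.sum_singleton]
  rw [show ((i00.1.1 : ℕ) = 0) from rfl, show ((i00.1.2 : ℕ) = 0) from rfl,
    show ((i10.1.1 : ℕ) = 1) from rfl, show ((i10.1.2 : ℕ) = 0) from rfl,
    show ((i01.1.1 : ℕ) = 0) from rfl, show ((i01.1.2 : ℕ) = 1) from rfl,
    show ((i20.1.1 : ℕ) = 2) from rfl, show ((i20.1.2 : ℕ) = 0) from rfl,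
    show ((i11.1.1 : ℕ) = 1) from rfl, show ((i11.1.2 : ℕ) = 1) from rfl,
    show ((i02.1.1 : ℕ) = 0) from rfl, show ((i02.1.2 : ℕ) = 2) from rfl]
  rw [← CXX_eq (v i00) 0 0, ← CXX_eq (v i10) 1 0, ← CXX_eq (v i01) 0 1,
    ← CXX_eq (v i20) 2 0, ← CXX_eq (v i11) 1 1, ← CXX_eq (v i02) 0 2]
  ring

/-! explicit riesz computations -/

lemma riesz_explicit (β : ℕ → ℕ → ℝ) (c00 c10 c01 c20 c11 c02 : ℝ) :
    riesz β (C c00 + C c10 * X 0 + C c01 * X 1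
      + C c20 * X 0 ^ 2 + C c11 * (X 0 * X 1) + C c02 * X 1 ^ 2)
    = c00 * β 0 0 + c10 * β 1 0 + c01 * β 0 1 + c20 * β 2 0 + c11 * β 1 1 + c02 * β 0 2 := by
  rw [show (C c00 + C c10 * X 0 + C c01 * X 1 + C c20 * X 0 ^ 2 + C c11 * (X 0 * X 1)
      + C c02 * X 1 ^ 2 : MvPolynomial (Fin 2) ℝ)
    = C c00 * X 0 ^ 0 * X 1 ^ 0 + C c10 * X 0 ^ 1 * X 1 ^ 0 + C c01 * X 0 ^ 0 * X 1 ^ 1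
      + C c20 * X 0 ^ 2 * X 1 ^ 0 + C c11 * X 0 ^ 1 * X 1 ^ 1 + C c02 * X 0 ^ 0 * X 1 ^ 2
    from by ring]
  simp only [CXX_eq]
  rw [riesz_add, riesz_add, riesz_add, riesz_add, riesz_add]
  simp only [riesz_monomial, mexp_0, mexp_1]

lemma riesz_affine_mul (β : ℕ → ℕ → ℝ) (x y z x' y' z' : ℝ) :
    riesz β ((C x + C y * X 0 + C z * X 1) * (C x' + C y' * X 0 + C z' * X 1))
    = x*x' * β 0 0 + (x*y' + y*x') * β 1 0 + (x*z' + z*x') * β 0 1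
      + y*y' * β 2 0 + (y*z' + z*y') * β 1 1 + z*z' * β 0 2 := by
  rw [show ((C x + C y * X 0 + C z * X 1) * (C x' + C y' * X 0 + C z' * X 1)
        : MvPolynomial (Fin 2) ℝ)
    = C (x*x') + C (x*y' + y*x') * X 0 + C (x*z' + z*x') * X 1
      + C (y*y') * X 0 ^ 2 + C (y*z' + z*y') * (X 0 * X 1) + C (z*z') * X 1 ^ 2
    from by simp only [C_add, C_mul]; ring]
  rw [riesz_explicit]

lemma riesz_affine (β : ℕ → ℕ → ℝ) (x y z : ℝ) :
    riesz β (C x + C y * X 0 + C z * X 1) = x * β 0 0 + y * β 1 0 + z * β 0 1 := by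
  rw [show (C x + C y * X 0 + C z * X 1 : MvPolynomial (Fin 2) ℝ)
    = C x + C y * X 0 + C z * X 1 + C 0 * X 0 ^ 2 + C 0 * (X 0 * X 1) + C 0 * X 1 ^ 2
    from by simp]
  rw [riesz_explicit]
  ring

lemma riesz_one (β : ℕ → ℕ → ℝ) : riesz β 1 = β 0 0 := by
  rw [show (1 : MvPolynomial (Fin 2) ℝ) = C 1 + C 0 * X 0 + C 0 * X 1 from by simp]
  rw [riesz_affine]; ring

/-- positivity of the quadratic form on affine polynomials -/
lemma pos_affine (β : ℕ → ℕ → ℝ) (hpd : (momentMatrix 2 β).PosDef) (x y z : ℝ)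
    (h : ¬(x = 0 ∧ y = 0 ∧ z = 0)) :
    0 < riesz β ((C x + C y * X 0 + C z * X 1) * (C x + C y * X 0 + C z * X 1)) := by
  classical
  set v : MIdx 2 → ℝ := fun q => if q = i00 then x else if q = i10 then y
    else if q = i01 then z else 0 with hv
  have h1 : v i00 = x := by simp only [hv, if_pos rfl]
  have h2 : v i10 = y := by
    simp only [hv, if_neg (show i10 ≠ i00 by decide), if_pos rfl]
    simp
  have h3 : v i01 = z := by
    simp only [hv, if_neg (show i01 ≠ i00 by decide),
      if_neg (show i01 ≠ i10 by decide), if_pos rfl]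
    simp
  have h4 : v i20 = 0 := by
    simp only [hv, if_neg (show i20 ≠ i00 by decide),
      if_neg (show i20 ≠ i10 by decide), if_neg (show i20 ≠ i01 by decide)]
  have h5 : v i11 = 0 := by
    simp only [hv, if_neg (show i11 ≠ i00 by decide),
      if_neg (show i11 ≠ i10 by decide), if_neg (show i11 ≠ i01 by decide)]
  have h6 : v i02 = 0 := by
    simp only [hv, if_neg (show i02 ≠ i00 by decide),
      if_neg (show i02 ≠ i10 by decide), if_neg (show i02 ≠ i01 by decide)]
  have hPP : PP v = C x + C y * X 0 + C z * X 1 := by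
    rw [PP_eq, h1, h2, h3, h4, h5, h6]
    simp
  have hvne : v ≠ 0 := by
    intro h0
    apply h
    refine ⟨?_, ?_, ?_⟩
    · have := congrFun h0 i00; rw [h1] at this; exact this
    · have := congrFun h0 i10; rw [h2] at this; exact this
    · have := congrFun h0 i01; rw [h3] at this; exact this
  rw [← hPP]
  exact riesz_sq_pos β hpd hvne

end Aux

/-! ### The substitution homomorphism -/

section Subst

variable (a b c d e f : ℝ)

noncomputable def psi1 : MvPolynomial (Fin 2) ℝ := C a + C b * X 0 + C c * X 1
noncomputable def psi2 : MvPolynomial (Fin 2) ℝ := C d + C e * X 0 + C f * X 1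

noncomputable def TT : MvPolynomial (Fin 2) ℝ →ₐ[ℝ] MvPolynomial (Fin 2) ℝ :=
  aeval ![psi1 a b c, psi2 d e f]

lemma TT_X0 : TT a b c d e f (X 0) = psi1 a b c := by simp [TT]
lemma TT_X1 : TT a b c d e f (X 1) = psi2 d e f := by simp [TT]

lemma TT_monomial (r : ℝ) (i j : ℕ) :
    TT a b c d e f (monomial (mexp i j) r) = C r * psi1 a b c ^ i * psi2 d e f ^ j := by
  rw [← CXX_eq, map_mul, map_mul, map_pow, map_pow, TT_X0, TT_X1]
  congr 1
  · congr 1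
    simp [TT]

/-- Left inverse of TT when the determinant is nonzero. -/
lemma TT_leftInv (hD : b * f - c * e ≠ 0) (p : MvPolynomial (Fin 2) ℝ)
    (hp : TT a b c d e f p = 0) : p = 0 := by
  set D := b * f - c * e with hDdef
  set S : MvPolynomial (Fin 2) ℝ →ₐ[ℝ] MvPolynomial (Fin 2) ℝ :=
    aeval ![C ((-f*a + c*d)/D) + C (f/D) * X 0 + C (-c/D) * X 1,
            C ((e*a - b*d)/D) + C (-e/D) * X 0 + C (b/D) * X 1] with hS
  have hcomp : S.comp (TT a b c d e f) = AlgHom.id ℝ _ := by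
    apply MvPolynomial.algHom_ext
    intro i
    fin_cases i
    · show S (TT a b c d e f (X 0)) = X 0
      rw [TT_X0, psi1]
      rw [map_add, map_add, map_mul, map_mul, aeval_C, aeval_C, aeval_C, aeval_X, aeval_X]
      simp only [Matrix.cons_val_zero, Matrix.cons_val_one, Matrix.head_cons]
      rw [show (algebraMap ℝ (MvPolynomial (Fin 2) ℝ)) = C from rfl]
      rw [show (C a + C b * (C ((-f*a + c*d)/D) + C (f/D) * X 0 + C (-c/D) * X 1)
          + C c * (C ((e*a - b*d)/D) + C (-e/D) * X 0 + C (b/D) * X 1)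
          : MvPolynomial (Fin 2) ℝ)
        = C (a + b*((-f*a + c*d)/D) + c*((e*a - b*d)/D))
          + C (b*(f/D) + c*(-e/D)) * X 0 + C (b*(-c/D) + c*(b/D)) * X 1
        from by simp only [C_add, C_mul]; ring]
      rw [show a + b*((-f*a + c*d)/D) + c*((e*a - b*d)/D) = 0 from by
        field_simp; ring]
      rw [show b*(f/D) + c*(-e/D) = 1 from by field_simp; rw [hDdef]; ring]
      rw [show b*(-c/D) + c*(b/D) = 0 from by field_simp; ring]
      simp
    · show S (TT a b c d e f (X 1)) = X 1
      rw [TT_X1, psi2]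
      rw [map_add, map_add, map_mul, map_mul, aeval_C, aeval_C, aeval_C, aeval_X, aeval_X]
      simp only [Matrix.cons_val_zero, Matrix.cons_val_one, Matrix.head_cons]
      rw [show (algebraMap ℝ (MvPolynomial (Fin 2) ℝ)) = C from rfl]
      rw [show (C d + C e * (C ((-f*a + c*d)/D) + C (f/D) * X 0 + C (-c/D) * X 1)
          + C f * (C ((e*a - b*d)/D) + C (-e/D) * X 0 + C (b/D) * X 1)
          : MvPolynomial (Fin 2) ℝ)
        = C (d + e*((-f*a + c*d)/D) + f*((e*a - b*d)/D))
          + C (e*(f/D) + f*(-e/D)) * X 0 + C (e*(-c/D) + f*(b/D)) * X 1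
        from by simp only [C_add, C_mul]; ring]
      rw [show d + e*((-f*a + c*d)/D) + f*((e*a - b*d)/D) = 0 from by
        field_simp; ring]
      rw [show e*(f/D) + f*(-e/D) = 0 from by field_simp; ring]
      rw [show e*(-c/D) + f*(b/D) = 1 from by field_simp; rw [hDdef]; ring]
      simp
  have : S (TT a b c d e f p) = p := by
    rw [← AlgHom.comp_apply, hcomp, AlgHom.id_apply]
  rw [hp, map_zero] at this
  exact this.symm

lemma totalDegree_psi1 : (psi1 a b c).totalDegree ≤ 1 := by
  unfold psi1
  refine le_trans (MvPolynomial.totalDegree_add _ _) (max_le ?_ ?_)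
  · refine le_trans (MvPolynomial.totalDegree_add _ _) (max_le ?_ ?_)
    · simp [MvPolynomial.totalDegree_C]
    · refine le_trans (MvPolynomial.totalDegree_mul _ _) ?_
      simp [MvPolynomial.totalDegree_C, MvPolynomial.totalDegree_X]
  · refine le_trans (MvPolynomial.totalDegree_mul _ _) ?_
    simp [MvPolynomial.totalDegree_C, MvPolynomial.totalDegree_X]

lemma totalDegree_psi2 : (psi2 d e f).totalDegree ≤ 1 := totalDegree_psi1 d e f

lemma totalDegree_TT_PP (v : MIdx 2 → ℝ) :
    (TT a b c d e f (PP v)).totalDegree ≤ 2 := by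
  unfold PP
  rw [map_sum]
  refine le_trans (MvPolynomial.totalDegree_finset_sum _ _) ?_
  refine Finset.sup_le fun p _ => ?_
  rw [TT_monomial]
  refine le_trans (MvPolynomial.totalDegree_mul _ _) ?_
  have h1 : ((psi1 a b c) ^ (p.1.1 : ℕ)).totalDegree ≤ (p.1.1 : ℕ) := by
    refine le_trans (MvPolynomial.totalDegree_pow _ _) ?_
    calc (p.1.1:ℕ) * (psi1 a b c).totalDegree ≤ (p.1.1:ℕ) * 1 :=
      Nat.mul_le_mul_left _ (totalDegree_psi1 a b c)
    _ = (p.1.1:ℕ) := Nat.mul_one _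
  have h2 : ((psi2 d e f) ^ (p.1.2 : ℕ)).totalDegree ≤ (p.1.2 : ℕ) := by
    refine le_trans (MvPolynomial.totalDegree_pow _ _) ?_
    calc (p.1.2:ℕ) * (psi2 d e f).totalDegree ≤ (p.1.2:ℕ) * 1 :=
      Nat.mul_le_mul_left _ (totalDegree_psi2 d e f)
    _ = (p.1.2:ℕ) := Nat.mul_one _
  have hC : ((C (v p) : MvPolynomial (Fin 2) ℝ) * psi1 a b c ^ (p.1.1:ℕ)).totalDegree
      ≤ (p.1.1 : ℕ) := by
    refine le_trans (MvPolynomial.totalDegree_mul _ _) ?_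
    simpa [MvPolynomial.totalDegree_C] using h1
  have := p.2
  omega

/-- the quadratic form of the transformed moment matrix -/
lemma quadform_trans (β : ℕ → ℕ → ℝ) (v : MIdx 2 → ℝ) :
    dotProduct v ((momentMatrix 2 (transSeq β a b c d e f)).mulVec v)
    = riesz β (TT a b c d e f (PP v) * TT a b c d e f (PP v)) := by
  have hmon : ∀ p : MIdx 2, TT a b c d e f (monomial (mexp p.1.1 p.1.2) (v p))
      = v p • (C 1 * psi1 a b c ^ (p.1.1:ℕ) * psi2 d e f ^ (p.1.2:ℕ)) := by
    intro p
    rw [show monomial (mexp (p.1.1:ℕ) (p.1.2:ℕ)) (v p)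
        = v p • monomial (mexp (p.1.1:ℕ) (p.1.2:ℕ)) (1:ℝ) from by
      rw [MvPolynomial.smul_monomial, smul_eq_mul, mul_one]]
    rw [map_smul, TT_monomial]
  unfold PP
  rw [map_sum]
  simp only [hmon]
  rw [Finset.sum_mul_sum, riesz_sum]
  simp only [riesz_sum]
  rw [dotProduct]
  refine Finset.sum_congr rfl fun p _ => ?_
  rw [Matrix.mulVec, dotProduct, Finset.mul_sum]
  refine Finset.sum_congr rfl fun q _ => ?_
  rw [smul_mul_smul_comm, riesz_smul]
  rw [momentMatrix]
  show v p * (transSeq β a b c d e f ((p.1.1:ℕ) + (q.1.1:ℕ)) ((p.1.2:ℕ) + (q.1.2:ℕ)) * v q)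
    = (v p * v q) * riesz β _
  rw [transSeq]
  rw [show ((C a + C b * X 0 + C c * X 1) ^ ((p.1.1:ℕ) + (q.1.1:ℕ))
      * (C d + C e * X 0 + C f * X 1) ^ ((p.1.2:ℕ) + (q.1.2:ℕ)) : MvPolynomial (Fin 2) ℝ)
    = (C 1 * psi1 a b c ^ (p.1.1:ℕ) * psi2 d e f ^ (p.1.2:ℕ))
      * (C 1 * psi1 a b c ^ (q.1.1:ℕ) * psi2 d e f ^ (q.1.2:ℕ)) from by
    rw [pow_add, pow_add, psi1, psi2, C_1]; ring]
  ring

end Subst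

lemma H10 (m1 m2 r1 : ℝ) (hr1 : r1 ≠ 0) :
    -m1/r1 * 1 + 1/r1 * m1 + 0 * m2 = 0 := by field_simp; ring

lemma H01 (m1 m2 rho r2 : ℝ) (hr2 : r2 ≠ 0) :
    (rho*m1 - m2)/r2 * 1 + -rho/r2 * m1 + 1/r2 * m2 = 0 := by field_simp; ring

lemma H20 (m1 m2 b20 b11 b02 r1 : ℝ) (hb20 : b20 = r1^2 + m1^2) (hr1 : r1 ≠ 0) :
    -m1/r1 * (-m1/r1) * 1 + (-m1/r1*(1/r1) + 1/r1*(-m1/r1)) * m1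
      + (-m1/r1*0 + 0*(-m1/r1)) * m2 + 1/r1*(1/r1) * b20
      + (1/r1*0 + 0*(1/r1)) * b11 + 0*0 * b02 = 1 := by
  rw [hb20]; field_simp; ring

lemma H11 (m1 m2 b20 b11 b02 s20 s11 rho r1 r2 : ℝ)
    (hrho : rho = s11/s20) (hb20 : b20 = s20 + m1^2) (hb11 : b11 = s11 + m1*m2)
    (hs20 : s20 ≠ 0) (hr1 : r1 ≠ 0) (hr2 : r2 ≠ 0) :
    -m1/r1 * ((rho*m1 - m2)/r2) * 1
      + (-m1/r1 * (-rho/r2) + 1/r1 * ((rho*m1 - m2)/r2)) * m1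
      + (-m1/r1 * (1/r2) + 0 * ((rho*m1 - m2)/r2)) * m2
      + 1/r1 * (-rho/r2) * b20
      + (1/r1 * (1/r2) + 0 * (-rho/r2)) * b11
      + 0 * (1/r2) * b02 = 0 := by
  rw [hrho, hb20, hb11]; field_simp; ring

lemma H02 (m1 m2 b20 b11 b02 s20 s11 rho r2 : ℝ)
    (hrho : rho = s11/s20) (hb20 : b20 = s20 + m1^2) (hb11 : b11 = s11 + m1*m2)
    (hb02 : b02 = r2^2 + m2^2 + s11^2/s20) (hs20 : s20 ≠ 0) (hr2 : r2 ≠ 0) :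
    (rho*m1 - m2)/r2 * ((rho*m1 - m2)/r2) * 1
      + ((rho*m1 - m2)/r2 * (-rho/r2) + -rho/r2 * ((rho*m1 - m2)/r2)) * m1
      + ((rho*m1 - m2)/r2 * (1/r2) + 1/r2 * ((rho*m1 - m2)/r2)) * m2
      + -rho/r2 * (-rho/r2) * b20
      + (-rho/r2 * (1/r2) + 1/r2 * (-rho/r2)) * b11
      + 1/r2 * (1/r2) * b02 = 1 := by
  rw [hrho, hb20, hb11, hb02]; field_simp; ring

lemma Ht2 (m1 m2 b20 b11 b02 s20 s11 : ℝ)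
    (hs20eq : s20 = b20 - m1^2) (hs11eq : s11 = b11 - m1*m2) (hs20 : s20 ≠ 0) :
    (s11/s20*m1 - m2) * (s11/s20*m1 - m2) * 1
      + ((s11/s20*m1 - m2) * (-(s11/s20)) + -(s11/s20) * (s11/s20*m1 - m2)) * m1
      + ((s11/s20*m1 - m2) * 1 + 1 * (s11/s20*m1 - m2)) * m2
      + -(s11/s20) * (-(s11/s20)) * b20
      + (-(s11/s20) * 1 + 1 * (-(s11/s20))) * b11
      + 1 * 1 * b02 = b02 - m2^2 - s11^2/s20 := by
  have hb20 : b20 = s20 + m1^2 := by linarith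
  have hb11 : b11 = s11 + m1*m2 := by linarith
  rw [hb20, hb11]; field_simp; ring

/-- Normalization. If `β₀₀ = 1` and `M(2)` is positive definite,
there is a degree-one transformation `Ψ` making the transformed `M̃(1)` the identity:
`β̃₀₀ = 1`, `β̃₁₀ = β̃₀₁ = β̃₁₁ = 0`, `β̃₂₀ = β̃₀₂ = 1`, with `M̃(2)` still
positive definite. -/
theorem exists_degree_one_transform_normalizing
    (β : ℕ → ℕ → ℝ) (hβ00 : β 0 0 = 1)
    (hpd : (momentMatrix 2 β).PosDef) :
    ∃ a b c d e f : ℝ, b * f - c * e ≠ 0 ∧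
      transSeq β a b c d e f 0 0 = 1 ∧
      transSeq β a b c d e f 1 0 = 0 ∧
      transSeq β a b c d e f 0 1 = 0 ∧
      transSeq β a b c d e f 1 1 = 0 ∧
      transSeq β a b c d e f 2 0 = 1 ∧
      transSeq β a b c d e f 0 2 = 1 ∧
      (momentMatrix 2 (transSeq β a b c d e f)).PosDef := by
  classical
  -- positivity of the variance
  have hs20pos : 0 < β 2 0 - β 1 0 ^ 2 := by
    have h := pos_affine β hpd (-β 1 0) 1 0 (fun h => one_ne_zero h.2.1)
    rw [riesz_affine_mul, hβ00] at h
    nlinarith [h]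
  have hs20ne : β 2 0 - β 1 0 ^ 2 ≠ 0 := ne_of_gt hs20pos
  set r1 := Real.sqrt (β 2 0 - β 1 0 ^ 2) with hr1def
  have hr1pos : 0 < r1 := Real.sqrt_pos.mpr hs20pos
  have hr1ne : r1 ≠ 0 := ne_of_gt hr1pos
  have hr1sq : r1 ^ 2 = β 2 0 - β 1 0 ^ 2 := Real.sq_sqrt hs20pos.le
  -- positivity of the conditional variance
  have ht2pos : 0 < β 0 2 - β 0 1 ^ 2 - (β 1 1 - β 1 0 * β 0 1) ^ 2 / (β 2 0 - β 1 0 ^ 2) := by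
    have h := pos_affine β hpd
      ((β 1 1 - β 1 0 * β 0 1)/(β 2 0 - β 1 0 ^ 2) * β 1 0 - β 0 1)
      (-((β 1 1 - β 1 0 * β 0 1)/(β 2 0 - β 1 0 ^ 2))) 1 (fun h => one_ne_zero h.2.2)
    rw [riesz_affine_mul, hβ00] at h
    rw [Ht2 (β 1 0) (β 0 1) (β 2 0) (β 1 1) (β 0 2)
      (β 2 0 - β 1 0 ^ 2) (β 1 1 - β 1 0 * β 0 1) (by ring) (by ring) hs20ne] at h
    exact h
  have ht2ne : β 0 2 - β 0 1 ^ 2 - (β 1 1 - β 1 0 * β 0 1) ^ 2 / (β 2 0 - β 1 0 ^ 2) ≠ 0 :=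
    ne_of_gt ht2pos
  set r2 := Real.sqrt (β 0 2 - β 0 1 ^ 2 - (β 1 1 - β 1 0 * β 0 1) ^ 2 / (β 2 0 - β 1 0 ^ 2))
    with hr2def
  have hr2pos : 0 < r2 := Real.sqrt_pos.mpr ht2pos
  have hr2ne : r2 ≠ 0 := ne_of_gt hr2pos
  have hr2sq : r2 ^ 2 = β 0 2 - β 0 1 ^ 2 - (β 1 1 - β 1 0 * β 0 1) ^ 2 / (β 2 0 - β 1 0 ^ 2) :=
    Real.sq_sqrt ht2pos.le
  set rho := (β 1 1 - β 1 0 * β 0 1)/(β 2 0 - β 1 0 ^ 2) with hrhodef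
  have hdet : 1/r1 * (1/r2) - (0:ℝ) * (-rho/r2) ≠ 0 := by
    have : 1/r1 * (1/r2) - (0:ℝ) * (-rho/r2) = 1/(r1*r2) := by field_simp; ring
    rw [this]
    exact ne_of_gt (div_pos one_pos (mul_pos hr1pos hr2pos))
  refine ⟨-β 1 0/r1, 1/r1, 0, (rho*β 1 0 - β 0 1)/r2, -rho/r2, 1/r2, hdet, ?_, ?_, ?_, ?_, ?_, ?_, ?_⟩
  · -- (0,0)
    simp only [transSeq, pow_zero, one_mul]
    rw [riesz_one, hβ00]
  · -- (1,0)
    simp only [transSeq, pow_one, pow_zero, mul_one]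
    rw [riesz_affine, hβ00]
    exact H10 (β 1 0) (β 0 1) r1 hr1ne
  · -- (0,1)
    simp only [transSeq, pow_one, pow_zero, one_mul]
    rw [riesz_affine, hβ00]
    exact H01 (β 1 0) (β 0 1) rho r2 hr2ne
  · -- (1,1)
    simp only [transSeq, pow_one]
    rw [riesz_affine_mul, hβ00]
    exact H11 (β 1 0) (β 0 1) (β 2 0) (β 1 1) (β 0 2) (β 2 0 - β 1 0 ^ 2)
      (β 1 1 - β 1 0 * β 0 1) rho r1 r2 hrhodef (by ring) (by ring) hs20ne hr1ne hr2ne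
  · -- (2,0)
    simp only [transSeq, pow_zero, mul_one, pow_two]
    rw [riesz_affine_mul, hβ00]
    exact H20 (β 1 0) (β 0 1) (β 2 0) (β 1 1) (β 0 2) r1 (by rw [hr1sq]; ring) hr1ne
  · -- (0,2)
    simp only [transSeq, pow_zero, one_mul, pow_two]
    rw [riesz_affine_mul, hβ00]
    refine H02 (β 1 0) (β 0 1) (β 2 0) (β 1 1) (β 0 2) (β 2 0 - β 1 0 ^ 2)
      (β 1 1 - β 1 0 * β 0 1) rho r2 hrhodef (by ring) (by ring) ?_ hs20ne hr2ne
    rw [hr2sq]; ring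
  · -- positive definiteness
    refine Matrix.PosDef.of_dotProduct_mulVec_pos ?_ ?_
    · ext p q
      simp only [Matrix.conjTranspose_apply, momentMatrix, star_trivial]
      rw [Nat.add_comm ((q.1.1 : ℕ)) ((p.1.1 : ℕ)), Nat.add_comm ((q.1.2 : ℕ)) ((p.1.2 : ℕ))]
    · intro v hv
      rw [show star v = v from star_trivial v]
      rw [quadform_trans]
      obtain ⟨w, hw⟩ := exists_PP _ (totalDegree_TT_PP (-β 1 0/r1) (1/r1) 0
        ((rho*β 1 0 - β 0 1)/r2) (-rho/r2) (1/r2) v)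
      rw [← hw]
      refine riesz_sq_pos β hpd ?_
      intro hw0
      apply hv
      apply PP_eq_zero
      apply TT_leftInv (-β 1 0/r1) (1/r1) 0 ((rho*β 1 0 - β 0 1)/r2) (-rho/r2) (1/r2) hdet
      rw [← hw, hw0]
      simp [PP]
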